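/- One-step invariant for the upper iterate (Part 1 of the proof of Theorem 1): assume f attains a unique global minimum over [a,b] at x* with a < x* < b (f(x*) < f(x) for all x ∈ [a,b], x ≠ x*). Let ε > 0 and 0 ≤ α ≤ ε/((b-a)·(1+k)·k). If x1, x2 ∈ [a,b] satisfy x1 < x2, x2 > x*, f(x2) - f(x1) ≥ 0, and f(x2) - f(x*) > ε, then the updated point x2' = x2 - α·(x2 - x1)·(1 + F(x2,x1)) still satisfies x2' > x*. -/

import Mathlib

open Set Filter Topology

/-- The global gradient of `f`: `F x y = (f y - f x) / (y - x)`. -/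
noncomputable def globalGrad (f : ℝ → ℝ) (x y : ℝ) : ℝ := (f y - f x) / (y - x)

/-- The Super Gradient Descent iteration with step `α` on `[a,b]`. -/
def IsSuGD (f : ℝ → ℝ) (a b α : ℝ) (x1 x2 : ℕ → ℝ) : Prop :=
  x1 0 = a ∧ x2 0 = b ∧ ∀ n : ℕ,
    (f (x2 n) - f (x1 n) < 0 →
      x1 (n + 1) = x1 n - α * (x1 n - x2 n) * (1 - globalGrad f (x2 n) (x1 n)) ∧
      x2 (n + 1) = x2 n) ∧
    (¬ (f (x2 n) - f (x1 n) < 0) →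
      x1 (n + 1) = x1 n ∧
      x2 (n + 1) = x2 n - α * (x2 n - x1 n) * (1 + globalGrad f (x2 n) (x1 n)))

theorem sugd_upper_iterate_invariant
    (a b k : ℝ) (hab : a < b) (hk : 0 < k) (f : ℝ → ℝ)
    (hlip : ∀ x ∈ Icc a b, ∀ y ∈ Icc a b, |f x - f y| ≤ k * |x - y|)
    (xstar : ℝ) (hxa : a < xstar) (hxb : xstar < b)
    (hmin : ∀ x ∈ Icc a b, x ≠ xstar → f xstar < f x)
    (ε : ℝ) (hε : 0 < ε)
    (α : ℝ) (hα0 : 0 ≤ α) (hαε : α ≤ ε / ((b - a) * (1 + k) * k))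
    (x1 x2 : ℝ) (hx1 : x1 ∈ Icc a b) (hx2 : x2 ∈ Icc a b)
    (hlt : x1 < x2) (hstar : xstar < x2)
    (hge : 0 ≤ f x2 - f x1) (hfar : f x2 - f xstar > ε) :
    xstar < x2 - α * (x2 - x1) * (1 + globalGrad f x2 x1) := by
  have hsub : 0 < x2 - x1 := sub_pos.2 hlt
  have hF : globalGrad f x2 x1 = (f x2 - f x1) / (x2 - x1) := by
    unfold globalGrad
    rw [show f x1 - f x2 = -(f x2 - f x1) by ring, show x1 - x2 = -(x2 - x1) by ring,
      neg_div_neg_eq]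
  have hF0 : 0 ≤ globalGrad f x2 x1 := hF ▸ div_nonneg hge hsub.le
  have hFk : globalGrad f x2 x1 ≤ k := by
    rw [hF, div_le_iff₀ hsub]
    calc f x2 - f x1 ≤ |f x2 - f x1| := le_abs_self _
      _ ≤ k * |x2 - x1| := hlip x2 hx2 x1 hx1
      _ = k * (x2 - x1) := by rw [abs_of_pos hsub]
  have hxs : xstar ∈ Icc a b := ⟨hxa.le, hxb.le⟩
  have hden : 0 < (b - a) * (1 + k) * k := by
    exact mul_pos (mul_pos (sub_pos.2 hab) (by linarith)) hk
  have hstep : α * (x2 - x1) * (1 + globalGrad f x2 x1) ≤ ε / k := by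
    have h1 : x2 - x1 ≤ b - a := by
      have := hx1.1; have := hx2.2; linarith
    have h2 : 1 + globalGrad f x2 x1 ≤ 1 + k := by linarith
    calc α * (x2 - x1) * (1 + globalGrad f x2 x1)
        ≤ α * ((b - a) * (1 + k)) := by
          have : (x2 - x1) * (1 + globalGrad f x2 x1) ≤ (b - a) * (1 + k) := by
            apply mul_le_mul h1 h2 (by linarith) (by linarith)
          nlinarith
      _ ≤ ε / ((b - a) * (1 + k) * k) * ((b - a) * (1 + k)) := by
          apply mul_le_mul_of_nonneg_right hαε (by nlinarith)
      _ = ε / k := by rw [div_mul_eq_mul_div, div_eq_div_iff hden.ne' hk.ne']; ring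
  have hgap : ε / k < x2 - xstar := by
    rw [div_lt_iff₀ hk]
    have h := hlip x2 hx2 xstar hxs
    rw [abs_of_pos (sub_pos.2 hstar)] at h
    have : f x2 - f xstar ≤ k * (x2 - xstar) := le_trans (le_abs_self _) h
    nlinarith
  linarith
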